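/- arXiv:2505.23245 — 6 statements merged into one kernel-verified Lean document; each statement's English description precedes it below -/
import Mathlib

section
/- Error characterization into residual and nonconformity (abstract form of Theorem 3.9): Let H be a real Hilbert space, V a closed subspace of H, u ∈ V, and u_h ∈ H arbitrary. Let A := {v ∈ H : v − u is orthogonal to every element of V}. Then ‖u − u_h‖² = (dist(u_h, A))² + (dist(u_h, V))², where dist(x, S) = inf_{s ∈ S} ‖x − s‖, and both infima are attained. -/
private lemma le_infDist_aux {α : Type*} [PseudoMetricSpace α] {s : Set α} {x : α} {b : ℝ}
    (hs : s.Nonempty) (h : ∀ y ∈ s, b ≤ dist x y) : b ≤ Metric.infDist x s :=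
  le_of_not_gt fun hlt => by
    obtain ⟨y, hy, hd⟩ := (Metric.infDist_lt_iff hs).1 hlt
    exact absurd hd (not_lt.2 (h y hy))

/-- Error characterization into residual and nonconformity: with
`A = {v | v - u ⊥ V}`, one has `‖u - u_h‖² = dist(u_h, A)² + dist(u_h, V)²`,
and both infima (distances) are attained. -/
theorem error_characterization
    {H : Type*} [NormedAddCommGroup H] [InnerProductSpace ℝ H] [CompleteSpace H]
    (V : Submodule ℝ H) (hV : IsClosed (V : Set H))
    (u : H) (hu : u ∈ V) (uh : H) :
    ‖u - uh‖ ^ 2 =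
        Metric.infDist uh {v : H | ∀ w ∈ V, (inner ℝ (v - u) w : ℝ) = 0} ^ 2 +
          Metric.infDist uh (V : Set H) ^ 2 ∧
      (∃ a ∈ {v : H | ∀ w ∈ V, (inner ℝ (v - u) w : ℝ) = 0},
        dist uh a = Metric.infDist uh {v : H | ∀ w ∈ V, (inner ℝ (v - u) w : ℝ) = 0}) ∧
      (∃ v ∈ (V : Set H), dist uh v = Metric.infDist uh (V : Set H)) := by
  haveI : CompleteSpace V := hV.completeSpace_coe
  set q : H := (V.orthogonalProjectionOnto uh : H) with hq
  have hqV : q ∈ V := (V.orthogonalProjectionOnto uh).2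
  have hperp : uh - q ∈ Vᗮ := V.sub_starProjection_mem_orthogonal uh
  set A : Set H := {v : H | ∀ w ∈ V, (inner ℝ (v - u) w : ℝ) = 0} with hA
  -- the minimizer for A
  have ha₀ : uh - q + u ∈ A := by
    intro w hw
    have : (inner ℝ w (uh - q) : ℝ) = 0 := (Submodule.mem_orthogonal _ _).1 hperp w hw
    have h2 : (inner ℝ (uh - q) w : ℝ) = 0 := by rwa [real_inner_comm]
    simpa using h2
  -- for any a ∈ A, ‖q - u‖ ≤ ‖uh - a‖
  have key : ∀ a ∈ A, ‖q - u‖ ≤ ‖uh - a‖ := by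
    intro a ha
    have hx : (uh - q) + (u - a) ∈ Vᗮ := by
      refine Vᗮ.add_mem hperp ?_
      rw [Submodule.mem_orthogonal]
      intro w hw
      have := ha w hw
      have : (inner ℝ w (a - u) : ℝ) = 0 := by rwa [real_inner_comm]
      have h3 : u - a = -(a - u) := by abel
      rw [h3, inner_neg_right, this, neg_zero]
    have hsplit : uh - a = ((uh - q) + (u - a)) + (q - u) := by abel
    have hinner : (inner ℝ ((uh - q) + (u - a)) (q - u) : ℝ) = 0 := by
      have := (Submodule.mem_orthogonal _ _).1 hx (q - u) (V.sub_mem hqV hu)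
      rwa [real_inner_comm]
    have hsq : ‖uh - a‖ ^ 2 = ‖(uh - q) + (u - a)‖ ^ 2 + ‖q - u‖ ^ 2 := by
      rw [hsplit, norm_add_sq_real, hinner]; ring
    have : ‖q - u‖ ^ 2 ≤ ‖uh - a‖ ^ 2 := by nlinarith [sq_nonneg ‖(uh - q) + (u - a)‖]
    exact (pow_le_pow_iff_left₀ (norm_nonneg _) (norm_nonneg _) two_ne_zero).1 this
  -- for any w ∈ V, ‖uh - q‖ ≤ ‖uh - w‖
  have keyV : ∀ w ∈ V, ‖uh - q‖ ≤ ‖uh - w‖ := by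
    intro w hw
    have hsplit : uh - w = (uh - q) + (q - w) := by abel
    have hinner : (inner ℝ (uh - q) (q - w) : ℝ) = 0 := by
      have := (Submodule.mem_orthogonal _ _).1 hperp (q - w) (V.sub_mem hqV hw)
      rwa [real_inner_comm]
    have hsq : ‖uh - w‖ ^ 2 = ‖uh - q‖ ^ 2 + ‖q - w‖ ^ 2 := by
      rw [hsplit, norm_add_sq_real, hinner]; ring
    have : ‖uh - q‖ ^ 2 ≤ ‖uh - w‖ ^ 2 := by nlinarith [sq_nonneg ‖q - w‖]
    exact (pow_le_pow_iff_left₀ (norm_nonneg _) (norm_nonneg _) two_ne_zero).1 this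
  have hdA : dist uh (uh - q + u) = ‖q - u‖ := by
    rw [dist_eq_norm]
    congr 1
    abel
  have hinfA : Metric.infDist uh A = ‖q - u‖ := by
    refine le_antisymm (hdA ▸ Metric.infDist_le_dist_of_mem ha₀) ?_
    refine le_infDist_aux ⟨_, ha₀⟩ fun a ha => ?_
    rw [dist_eq_norm]
    exact key a ha
  have hinfV : Metric.infDist uh (V : Set H) = ‖uh - q‖ := by
    refine le_antisymm ?_ ?_
    · have := Metric.infDist_le_dist_of_mem (x := uh) hqV
      rwa [dist_eq_norm] at this
    · refine le_infDist_aux ⟨q, hqV⟩ fun w hw => ?_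
      rw [dist_eq_norm]
      exact keyV w hw
  refine ⟨?_, ⟨uh - q + u, ha₀, by rw [hdA, hinfA]⟩, ⟨q, hqV, by
    rw [dist_eq_norm, hinfV]⟩⟩
  rw [hinfA, hinfV]
  have hsplit : u - uh = (u - q) + (q - uh) := by abel
  have hinner : (inner ℝ (u - q) (q - uh) : ℝ) = 0 := by
    have h1 : q - uh ∈ Vᗮ := by
      have := Vᗮ.neg_mem hperp
      simpa [neg_sub] using this
    exact (Submodule.mem_orthogonal' _ _).1 h1 (u - q) (V.sub_mem hu hqV) |>.symm ▸
      ((Submodule.mem_orthogonal _ _).1 h1 (u - q) (V.sub_mem hu hqV))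
  rw [hsplit, norm_add_sq_real, hinner]
  have h1 : ‖u - q‖ = ‖q - u‖ := by rw [norm_sub_rev]
  have h2 : ‖q - uh‖ = ‖uh - q‖ := by rw [norm_sub_rev]
  rw [h1, h2]; ring
end

section
/- Strong monotonicity of the prototype vector field (property (5.3a) for example (5.5)): Let c, C ∈ ℝ with 0 < c ≤ C, let d ≥ 1, and define k̃(r) = c + (C − c)/√(1 + r²) and F : ℝ^d → ℝ^d by F(v) = k̃(|v|)·v, where |·| and ⟪·,·⟫ are the Euclidean norm and inner product on ℝ^d. Then for all v, w ∈ ℝ^d one has c·|v − w|² ≤ ⟪v − w, F(v) − F(w)⟫. -/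
lemma proto_helper (x y sx sy : ℝ) (hx : 0 ≤ x) (hy : 0 ≤ y)
    (hsx : 0 < sx) (hsy : 0 < sy) (h1 : sx ^ 2 = 1 + x ^ 2) (h2 : sy ^ 2 = 1 + y ^ 2) :
    0 ≤ (x - y) * (x * sy - y * sx) := by
  have hPQ : ((x - y) * (x * sy - y * sx)) * ((x + y) * (x * sy + y * sx))
      = (x ^ 2 - y ^ 2) ^ 2 := by
    linear_combination (x ^ 2 - y ^ 2) * x ^ 2 * h2 - (x ^ 2 - y ^ 2) * y ^ 2 * h1
  rcases eq_or_lt_of_le (add_nonneg hx hy) with h0 | h0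
  · have hx0 : x = 0 := by linarith
    have hy0 : y = 0 := by linarith
    simp [hx0, hy0]
  · have hQ : 0 < (x + y) * (x * sy + y * sx) := by
      rcases lt_or_ge 0 x with hx' | hx'
      · have : 0 < x * sy + y * sx := by positivity
        positivity
      · have hx0 : x = 0 := le_antisymm hx' hx
        have hy' : 0 < y := by linarith [h0]
        have : 0 < x * sy + y * sx := by rw [hx0]; positivity
        positivity
    nlinarith [hPQ, sq_nonneg (x ^ 2 - y ^ 2), hQ]

/-- Strong monotonicity of the prototype vector field `F(v) = k̃(|v|)·v` with
`k̃(r) = c + (C − c)/√(1 + r²)`: for all `v, w`, `c·|v − w|² ≤ ⟪v − w, F(v) − F(w)⟫`. -/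
theorem prototype_field_strong_monotonicity
    (c C : ℝ) (hc : 0 < c) (hcC : c ≤ C) (d : ℕ) (hd : 1 ≤ d)
    (v w : EuclideanSpace ℝ (Fin d)) :
    c * ‖v - w‖ ^ 2 ≤
      (inner ℝ (v - w)
        ((c + (C - c) / Real.sqrt (1 + ‖v‖ ^ 2)) • v -
          (c + (C - c) / Real.sqrt (1 + ‖w‖ ^ 2)) • w) : ℝ) := by
  have hnv0 : 0 ≤ ‖v‖ := norm_nonneg v
  have hnw0 : 0 ≤ ‖w‖ := norm_nonneg w
  set sx := Real.sqrt (1 + ‖v‖ ^ 2) with hsxdef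
  set sy := Real.sqrt (1 + ‖w‖ ^ 2) with hsydef
  have hsx : 0 < sx := Real.sqrt_pos.2 (by positivity)
  have hsy : 0 < sy := Real.sqrt_pos.2 (by positivity)
  have hsx2 : sx ^ 2 = 1 + ‖v‖ ^ 2 := Real.sq_sqrt (by positivity)
  have hsy2 : sy ^ 2 = 1 + ‖w‖ ^ 2 := Real.sq_sqrt (by positivity)
  set a := (C - c) / sx with hadef
  set b := (C - c) / sy with hbdef
  have ha : 0 ≤ a := div_nonneg (by linarith) hsx.le
  have hb : 0 ≤ b := div_nonneg (by linarith) hsy.le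
  have key : 0 ≤ (‖v‖ - ‖w‖) * (a * ‖v‖ - b * ‖w‖) := by
    have h := proto_helper ‖v‖ ‖w‖ sx sy hnv0 hnw0 hsx hsy hsx2 hsy2
    have hab : a * ‖v‖ - b * ‖w‖ = (C - c) * ((‖v‖ * sy - ‖w‖ * sx) / (sx * sy)) := by
      rw [hadef, hbdef]
      field_simp
    rw [hab]
    have h2 : 0 ≤ (‖v‖ - ‖w‖) * ((‖v‖ * sy - ‖w‖ * sx) / (sx * sy)) := by
      rw [mul_div_assoc']
      exact div_nonneg h (mul_pos hsx hsy).le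
    nlinarith [h2]
  have hip : (inner ℝ v w : ℝ) ≤ ‖v‖ * ‖w‖ := real_inner_le_norm v w
  have hns : ‖v - w‖ ^ 2 = ‖v‖ ^ 2 - 2 * (inner ℝ v w : ℝ) + ‖w‖ ^ 2 := by
    rw [norm_sub_sq_real]
  have hcomm : (inner ℝ w v : ℝ) = (inner ℝ v w : ℝ) := real_inner_comm v w
  rw [inner_sub_right, real_inner_smul_right, real_inner_smul_right,
    inner_sub_left, inner_sub_left, real_inner_self_eq_norm_sq,
    real_inner_self_eq_norm_sq, hcomm, hns]
  nlinarith [mul_nonneg ha (sub_nonneg.2 hip), mul_nonneg hb (sub_nonneg.2 hip), key]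
end

section
/- Lipschitz continuity of the prototype vector field (property (5.3b) for example (5.5)): Let c, C ∈ ℝ with 0 < c ≤ C, let d ≥ 1, and define k̃(r) = c + (C − c)/√(1 + r²) and F : ℝ^d → ℝ^d by F(v) = k̃(|v|)·v, where |·| is the Euclidean norm on ℝ^d. Then for all v, w ∈ ℝ^d one has |F(v) − F(w)| ≤ C·|v − w|. -/
private theorem base_ineq (p q s a b : ℝ) (hp : 0 ≤ p) (hq : 0 ≤ q) (hs : s^2 ≤ p*q)
    (ha : 1 ≤ a) (hb : 1 ≤ b) (ha2 : a^2 = 1+p) (hb2 : b^2 = 1+q) :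
    p*b^2 + q*a^2 - 2*s*(a*b) ≤ (p+q-2*s)*(a^2*b^2) := by
  set m := a*b with hm
  have hm1 : 1 ≤ m := one_le_mul_of_one_le_of_one_le ha hb
  have hm2 : m^2 = (1+p)*(1+q) := by rw [hm, mul_pow, ha2, hb2]
  have hspq : 2*s ≤ p + q := by nlinarith [sq_nonneg (p-q), sq_nonneg s]
  have hms : 1 + s ≤ m := by nlinarith [sq_nonneg (m - 1 - s), sq_nonneg (m + 1 + s)]
  have key : 2*s*m*(m-1) ≤ p^2*(1+q) + q^2*(1+p) := by
    rcases le_or_gt s 0 with h | h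
    · nlinarith [mul_nonneg (mul_nonneg (neg_nonneg.2 h) (zero_le_one.trans hm1))
        (sub_nonneg.2 hm1), sq_nonneg p, sq_nonneg q]
    · have h1 : m*(m-1) ≤ p + q + p*q - s := by nlinarith
      have h2 : 2*s*(m*(m-1)) ≤ 2*s*(p+q+p*q-s) :=
        mul_le_mul_of_nonneg_left h1 (by linarith)
      have h3 : 2*s*(p+q) - 2*s^2 ≤ p^2 + q^2 := by
        nlinarith [sq_nonneg (p+q-2*s), sq_nonneg (p-q)]
      have h4 : 2*s*(p*q) ≤ (p+q)*(p*q) := by nlinarith [mul_nonneg hp hq]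
      nlinarith
  rw [ha2, hb2]
  nlinarith [key, hm2]

private theorem contraction_step {d : ℕ} (v w : EuclideanSpace ℝ (Fin d)) :
    ‖(Real.sqrt (1 + ‖v‖^2))⁻¹ • v - (Real.sqrt (1 + ‖w‖^2))⁻¹ • w‖ ≤ ‖v - w‖ := by
  set a := Real.sqrt (1 + ‖v‖^2) with hadef
  set b := Real.sqrt (1 + ‖w‖^2) with hbdef
  have ha : 1 ≤ a := by
    have := Real.sqrt_le_sqrt (show (1:ℝ) ≤ 1 + ‖v‖^2 by nlinarith [sq_nonneg ‖v‖])
    simpa [hadef] using this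
  have hb : 1 ≤ b := by
    have := Real.sqrt_le_sqrt (show (1:ℝ) ≤ 1 + ‖w‖^2 by nlinarith [sq_nonneg ‖w‖])
    simpa [hbdef] using this
  have ha0 : 0 < a := lt_of_lt_of_le one_pos ha
  have hb0 : 0 < b := lt_of_lt_of_le one_pos hb
  have ha2 : a^2 = 1 + ‖v‖^2 := Real.sq_sqrt (by positivity)
  have hb2 : b^2 = 1 + ‖w‖^2 := Real.sq_sqrt (by positivity)
  set p := ‖v‖^2
  set q := ‖w‖^2
  set s := (inner ℝ v w : ℝ) with hsdef
  have hs : s^2 ≤ p*q := by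
    have := abs_real_inner_le_norm v w
    calc s^2 ≤ (‖v‖*‖w‖)^2 := by
          rw [← sq_abs]; exact pow_le_pow_left₀ (abs_nonneg _) this 2
      _ = p*q := by rw [mul_pow]
  have hbase := base_ineq p q s a b (by positivity) (by positivity) hs ha hb ha2 hb2
  have e1 : ‖a⁻¹ • v - b⁻¹ • w‖^2 = p/a^2 + q/b^2 - 2*s/(a*b) := by
    rw [norm_sub_sq_real]
    rw [norm_smul, norm_smul, real_inner_smul_left, real_inner_smul_right]
    rw [Real.norm_eq_abs, Real.norm_eq_abs, abs_of_pos (inv_pos.2 ha0),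
      abs_of_pos (inv_pos.2 hb0), ← hsdef]
    field_simp
    ring
  have e2 : ‖v - w‖^2 = p + q - 2*s := by
    rw [norm_sub_sq_real]; ring
  have hsq : ‖a⁻¹ • v - b⁻¹ • w‖^2 ≤ ‖v - w‖^2 := by
    rw [e1, e2]
    rw [div_add_div _ _ (by positivity) (by positivity), div_sub_div _ _ (by positivity)
      (by positivity), div_le_iff₀ (by positivity)]
    calc (p * b ^ 2 + a ^ 2 * q) * (a * b) - a ^ 2 * b ^ 2 * (2 * s)
        = (p*b^2 + q*a^2 - 2*s*(a*b)) * (a*b) := by ring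
      _ ≤ ((p+q-2*s)*(a^2*b^2)) * (a*b) := by
          apply mul_le_mul_of_nonneg_right hbase (by positivity)
      _ = (p + q - 2 * s) * (a ^ 2 * b ^ 2 * (a * b)) := by ring
  have := Real.sqrt_le_sqrt hsq
  rwa [Real.sqrt_sq (norm_nonneg _), Real.sqrt_sq (norm_nonneg _)] at this

/-- Lipschitz continuity of the prototype vector field `F(v) = k̃(|v|)·v` with
`k̃(r) = c + (C − c)/√(1 + r²)`: for all `v, w`, `|F(v) − F(w)| ≤ C·|v − w|`. -/
theorem prototype_field_lipschitz
    (c C : ℝ) (hc : 0 < c) (hcC : c ≤ C) (d : ℕ) (hd : 1 ≤ d)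
    (v w : EuclideanSpace ℝ (Fin d)) :
    ‖(c + (C - c) / Real.sqrt (1 + ‖v‖ ^ 2)) • v -
        (c + (C - c) / Real.sqrt (1 + ‖w‖ ^ 2)) • w‖ ≤ C * ‖v - w‖ := by
  have hsplit : (c + (C - c) / Real.sqrt (1 + ‖v‖ ^ 2)) • v -
      (c + (C - c) / Real.sqrt (1 + ‖w‖ ^ 2)) • w
      = c • (v - w) + (C - c) • ((Real.sqrt (1 + ‖v‖^2))⁻¹ • v -
          (Real.sqrt (1 + ‖w‖^2))⁻¹ • w) := by
    rw [div_eq_mul_inv, div_eq_mul_inv]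
    module
  calc ‖(c + (C - c) / Real.sqrt (1 + ‖v‖ ^ 2)) • v -
      (c + (C - c) / Real.sqrt (1 + ‖w‖ ^ 2)) • w‖
      ≤ ‖c • (v - w)‖ + ‖(C - c) • ((Real.sqrt (1 + ‖v‖^2))⁻¹ • v -
          (Real.sqrt (1 + ‖w‖^2))⁻¹ • w)‖ := by rw [hsplit]; exact norm_add_le _ _
    _ = c * ‖v - w‖ + (C - c) * ‖(Real.sqrt (1 + ‖v‖^2))⁻¹ • v -
          (Real.sqrt (1 + ‖w‖^2))⁻¹ • w‖ := by
        rw [norm_smul, norm_smul, Real.norm_eq_abs, Real.norm_eq_abs,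
          abs_of_pos hc, abs_of_nonneg (by linarith)]
    _ ≤ c * ‖v - w‖ + (C - c) * ‖v - w‖ := by
        gcongr
        · exact contraction_step v w
    _ = C * ‖v - w‖ := by ring
end

section
/- Residual bound for the auxiliary nonlinear projection (abstract form of the bound (5.23) in the proof of Theorem 5.6): Let H be a real Hilbert space, V a closed subspace of H with orthogonal projection P_V, c, C ∈ ℝ with 0 < c ≤ C, and Ψ : H → H a map such that for all x, y ∈ H, c‖x − y‖² ≤ ⟪x − y, Ψ(x) − Ψ(y)⟫ and ‖Ψ(x) − Ψ(y)‖ ≤ C‖x − y‖. Let u, ζ, u_h ∈ H with Ψ(u) ∈ V, Ψ(ζ) ∈ V, and ζ − u_h orthogonal to every element of V. Then √c · ‖u − ζ‖ ≤ (C/√c) · ‖P_V(u − u_h)‖. -/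
/-- Residual bound for the auxiliary nonlinear projection:
`√c · ‖u − ζ‖ ≤ (C/√c) · ‖P_V (u − u_h)‖`. -/
theorem auxiliary_projection_residual_bound
    {H : Type*} [NormedAddCommGroup H] [InnerProductSpace ℝ H] [CompleteSpace H]
    (V : Submodule ℝ H) [CompleteSpace V]
    (c C : ℝ) (hc : 0 < c) (hcC : c ≤ C) (Ψ : H → H)
    (hmono : ∀ x y : H, c * ‖x - y‖ ^ 2 ≤ (inner ℝ (x - y) (Ψ x - Ψ y) : ℝ))
    (hlip : ∀ x y : H, ‖Ψ x - Ψ y‖ ≤ C * ‖x - y‖)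
    (u ζ uh : H) (hu : Ψ u ∈ V) (hζ : Ψ ζ ∈ V)
    (horth : ∀ w ∈ V, (inner ℝ (ζ - uh) w : ℝ) = 0) :
    Real.sqrt c * ‖u - ζ‖ ≤
      (C / Real.sqrt c) * ‖(V.orthogonalProjection (u - uh) : H)‖ := by
  set P : H := (V.orthogonalProjection (u - uh) : H)
  have hV : Ψ u - Ψ ζ ∈ V := V.sub_mem hu hζ
  -- key: c‖u-ζ‖² ≤ ⟪u-ζ, Ψu-Ψζ⟫ = ⟪P, Ψu-Ψζ⟫
  have h1 : (inner ℝ (u - ζ) (Ψ u - Ψ ζ) : ℝ) = inner ℝ P (Ψ u - Ψ ζ) := by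
    have h2 : (inner ℝ (u - uh) (Ψ u - Ψ ζ) : ℝ) = inner ℝ P (Ψ u - Ψ ζ) := by
      have := V.starProjection_inner_eq_zero (u - uh) (Ψ u - Ψ ζ) hV
      have h3 : (inner ℝ ((u - uh) - P) (Ψ u - Ψ ζ) : ℝ) = 0 := this
      rw [inner_sub_left] at h3
      linarith
    have h4 : (inner ℝ (u - ζ) (Ψ u - Ψ ζ) : ℝ)
        = inner ℝ (u - uh) (Ψ u - Ψ ζ) - inner ℝ (ζ - uh) (Ψ u - Ψ ζ) := by
      rw [← inner_sub_left]; congr 1; abel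
    rw [h4, horth _ hV, h2]; ring
  have hkey : c * ‖u - ζ‖ ^ 2 ≤ C * ‖u - ζ‖ * ‖P‖ := by
    calc c * ‖u - ζ‖ ^ 2 ≤ (inner ℝ (u - ζ) (Ψ u - Ψ ζ) : ℝ) := hmono u ζ
      _ = inner ℝ P (Ψ u - Ψ ζ) := h1
      _ ≤ ‖P‖ * ‖Ψ u - Ψ ζ‖ := real_inner_le_norm _ _
      _ ≤ ‖P‖ * (C * ‖u - ζ‖) := by
          exact mul_le_mul_of_nonneg_left (hlip u ζ) (norm_nonneg _)
      _ = C * ‖u - ζ‖ * ‖P‖ := by ring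
  have hnz : ‖u - ζ‖ ≤ (C / c) * ‖P‖ := by
    rcases eq_or_lt_of_le (norm_nonneg (u - ζ)) with h | h
    · rw [← h]
      have hC : (0:ℝ) < C := hc.trans_le hcC
      exact mul_nonneg (div_nonneg hC.le hc.le) (norm_nonneg _)
    · have : c * ‖u - ζ‖ ≤ C * ‖P‖ := by
        nlinarith [norm_nonneg P]
      rw [div_mul_eq_mul_div, le_div_iff₀ hc]
      nlinarith
  have hsq : Real.sqrt c > 0 := Real.sqrt_pos.mpr hc
  have : Real.sqrt c * ‖u - ζ‖ ≤ Real.sqrt c * ((C / c) * ‖P‖) :=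
    mul_le_mul_of_nonneg_left hnz hsq.le
  calc Real.sqrt c * ‖u - ζ‖ ≤ Real.sqrt c * ((C / c) * ‖P‖) := this
    _ = (C / Real.sqrt c) * ‖P‖ := by
        field_simp
        rw [Real.sq_sqrt hc.le]
        ring
end

section
/- Nonconformity bound for the auxiliary nonlinear projection (abstract form of the bound (5.27) in the proof of Theorem 5.6): Let H be a real Hilbert space, V a closed subspace of H, c ∈ ℝ with c > 0, and Ψ : H → H a map such that for all x, y ∈ H, c‖x − y‖² ≤ ⟪x − y, Ψ(x) − Ψ(y)⟫. Let ζ, u_h ∈ H with Ψ(ζ) ∈ V and ζ − u_h orthogonal to every element of V. Then √c · ‖ζ − u_h‖ ≤ (1/√c) · inf_{v ∈ V} ‖Ψ(u_h) − v‖. -/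
/-- Nonconformity bound for the auxiliary nonlinear projection:
`√c · ‖ζ − u_h‖ ≤ (1/√c) · inf_{v ∈ V} ‖Ψ(u_h) − v‖`. -/
theorem auxiliary_projection_nonconformity_bound
    {H : Type*} [NormedAddCommGroup H] [InnerProductSpace ℝ H] [CompleteSpace H]
    (V : Submodule ℝ H) (hV : IsClosed (V : Set H))
    (c : ℝ) (hc : 0 < c) (Ψ : H → H)
    (hmono : ∀ x y : H, c * ‖x - y‖ ^ 2 ≤ (inner ℝ (x - y) (Ψ x - Ψ y) : ℝ))
    (ζ uh : H) (hζ : Ψ ζ ∈ V)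
    (horth : ∀ w ∈ V, (inner ℝ (ζ - uh) w : ℝ) = 0) :
    Real.sqrt c * ‖ζ - uh‖ ≤
      (1 / Real.sqrt c) * Metric.infDist (Ψ uh) (V : Set H) := by
  have hsc : 0 < Real.sqrt c := Real.sqrt_pos.mpr hc
  have key : ∀ v ∈ (V : Set H), c * ‖ζ - uh‖ ≤ ‖Ψ uh - v‖ := by
    intro v hv
    rcases eq_or_ne ‖ζ - uh‖ 0 with h0 | h0
    · simpa [h0] using norm_nonneg (Ψ uh - v)
    have hn : 0 < ‖ζ - uh‖ := lt_of_le_of_ne (norm_nonneg _) (Ne.symm h0)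
    have h1 : c * ‖ζ - uh‖ ^ 2 ≤ (inner ℝ (ζ - uh) (v - Ψ uh) : ℝ) := by
      have := hmono ζ uh
      have h2 : (inner ℝ (ζ - uh) (Ψ ζ - Ψ uh) : ℝ)
          = inner ℝ (ζ - uh) (Ψ ζ - v) + inner ℝ (ζ - uh) (v - Ψ uh) := by
        rw [← inner_add_right, sub_add_sub_cancel]
      have h3 : (inner ℝ (ζ - uh) (Ψ ζ - v) : ℝ) = 0 :=
        horth _ (V.sub_mem hζ hv)
      linarith [this, h2 ▸ this]
    have h4 : (inner ℝ (ζ - uh) (v - Ψ uh) : ℝ) ≤ ‖ζ - uh‖ * ‖Ψ uh - v‖ := by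
      have := real_inner_le_norm (ζ - uh) (v - Ψ uh)
      rwa [show ‖v - Ψ uh‖ = ‖Ψ uh - v‖ from norm_sub_rev _ _] at this
    have : c * ‖ζ - uh‖ ^ 2 ≤ ‖ζ - uh‖ * ‖Ψ uh - v‖ := h1.trans h4
    nlinarith
  have hle : c * ‖ζ - uh‖ ≤ Metric.infDist (Ψ uh) (V : Set H) := by
    by_contra h
    push_neg at h
    obtain ⟨y, hy, hlt⟩ := (Metric.infDist_lt_iff ⟨0, V.zero_mem⟩).mp h
    rw [dist_eq_norm] at hlt
    linarith [key y hy]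
  have hcs : Real.sqrt c * Real.sqrt c = c := Real.mul_self_sqrt hc.le
  calc Real.sqrt c * ‖ζ - uh‖
      = (1 / Real.sqrt c) * (c * ‖ζ - uh‖) := by
        field_simp; nlinarith [hcs, norm_nonneg (ζ - uh)]
    _ ≤ (1 / Real.sqrt c) * Metric.infDist (Ψ uh) (V : Set H) := by
        apply mul_le_mul_of_nonneg_left hle (by positivity)
end

section
/- Guaranteed upper bound for the total flux error of the nonlinear problem (abstract form of the first inequality in (5.31) of Remark 5.10): Let H be a real Hilbert space, V a closed subspace of H with orthogonal projection P_V, c, C ∈ ℝ with 0 < c ≤ C, and Ψ : H → H a map such that for all x, y ∈ H, c‖x − y‖² ≤ ⟪x − y, Ψ(x) − Ψ(y)⟫ and ‖Ψ(x) − Ψ(y)‖ ≤ C‖x − y‖. Let u ∈ H with Ψ(u) ∈ V. Then for every u_h ∈ H, √c · ‖u − u_h‖ ≤ (C/√c) · ‖P_V(u − u_h)‖ + (1/√c) · inf_{v ∈ V} ‖Ψ(u_h) − v‖. -/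
/-- Guaranteed upper bound for the total flux error of the nonlinear problem:
`√c · ‖u − u_h‖ ≤ (C/√c) · ‖P_V (u − u_h)‖ + (1/√c) · inf_{v ∈ V} ‖Ψ(u_h) − v‖`. -/
theorem nonlinear_total_error_upper_bound
    {H : Type*} [NormedAddCommGroup H] [InnerProductSpace ℝ H] [CompleteSpace H]
    (V : Submodule ℝ H) [CompleteSpace V]
    (c C : ℝ) (hc : 0 < c) (hcC : c ≤ C) (Ψ : H → H)
    (hmono : ∀ x y : H, c * ‖x - y‖ ^ 2 ≤ (inner ℝ (x - y) (Ψ x - Ψ y) : ℝ))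
    (hlip : ∀ x y : H, ‖Ψ x - Ψ y‖ ≤ C * ‖x - y‖)
    (u : H) (hu : Ψ u ∈ V) :
    ∀ uh : H,
      Real.sqrt c * ‖u - uh‖ ≤
        (C / Real.sqrt c) * ‖(V.orthogonalProjectionOnto (u - uh) : H)‖ +
          (1 / Real.sqrt c) * Metric.infDist (Ψ uh) (V : Set H) := by
  intro uh
  have hs : (0:ℝ) < Real.sqrt c := Real.sqrt_pos.2 hc
  have hss : Real.sqrt c * Real.sqrt c = c := Real.mul_self_sqrt hc.le
  set e : H := u - uh with he
  set Pe : H := (V.orthogonalProjectionOnto e : H) with hPe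
  have hD0 : (0:ℝ) ≤ Metric.infDist (Ψ uh) (V : Set H) := Metric.infDist_nonneg
  -- orthogonality of e - Pe to V
  have horth : ∀ w ∈ V, (inner ℝ (e - Pe) w : ℝ) = 0 := fun w hw =>
    (Submodule.mem_orthogonal' V _).1 (V.sub_starProjection_mem_orthogonal e) w hw
  have hePe : ‖e - Pe‖ ≤ ‖e‖ := by
    have h1 : (inner ℝ (e - Pe) (e - Pe) : ℝ) = inner ℝ (e - Pe) e := by
      have := horth Pe (V.orthogonalProjectionOnto e).2
      rw [inner_sub_right, this]; ring
    have h2 : ‖e - Pe‖ ^ 2 ≤ ‖e - Pe‖ * ‖e‖ := by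
      rw [← real_inner_self_eq_norm_sq, h1]
      exact real_inner_le_norm _ _
    nlinarith [norm_nonneg (e - Pe), norm_nonneg e, sq_nonneg (‖e - Pe‖ - ‖e‖)]
  -- key estimate with an arbitrary v ∈ V
  have key : ∀ v ∈ V, c * ‖e‖ ^ 2 ≤ C * ‖Pe‖ * ‖e‖ + ‖e‖ * dist (Ψ uh) v := by
    intro v hv
    have hmono' := hmono u uh
    have hsplit : (inner ℝ e (Ψ u - Ψ uh) : ℝ) =
        inner ℝ Pe (Ψ u - Ψ uh) + inner ℝ (e - Pe) (v - Ψ uh) := by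
      have h0 : (inner ℝ (e - Pe) (Ψ u - v) : ℝ) = 0 :=
        horth _ (Submodule.sub_mem V hu hv)
      have : (inner ℝ (e - Pe) (Ψ u - Ψ uh) : ℝ) = inner ℝ (e - Pe) (v - Ψ uh) := by
        have : (inner ℝ (e - Pe) (Ψ u - Ψ uh) : ℝ)
            = inner ℝ (e - Pe) (Ψ u - v) + inner ℝ (e - Pe) (v - Ψ uh) := by
          rw [← inner_add_right]; congr 1; abel
        rw [this, h0, zero_add]
      rw [← this, ← inner_add_left]; congr 1; abel
    have hb1 : (inner ℝ Pe (Ψ u - Ψ uh) : ℝ) ≤ C * ‖Pe‖ * ‖e‖ := by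
      calc (inner ℝ Pe (Ψ u - Ψ uh) : ℝ) ≤ ‖Pe‖ * ‖Ψ u - Ψ uh‖ := real_inner_le_norm _ _
        _ ≤ ‖Pe‖ * (C * ‖e‖) := by
            exact mul_le_mul_of_nonneg_left (hlip u uh) (norm_nonneg _)
        _ = C * ‖Pe‖ * ‖e‖ := by ring
    have hb2 : (inner ℝ (e - Pe) (v - Ψ uh) : ℝ) ≤ ‖e‖ * dist (Ψ uh) v := by
      calc (inner ℝ (e - Pe) (v - Ψ uh) : ℝ) ≤ ‖e - Pe‖ * ‖v - Ψ uh‖ := real_inner_le_norm _ _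
        _ ≤ ‖e‖ * ‖v - Ψ uh‖ := mul_le_mul_of_nonneg_right hePe (norm_nonneg _)
        _ = ‖e‖ * dist (Ψ uh) v := by rw [dist_eq_norm]; congr 1; exact norm_sub_rev _ _
    calc c * ‖e‖ ^ 2 ≤ (inner ℝ e (Ψ u - Ψ uh) : ℝ) := hmono'
      _ = inner ℝ Pe (Ψ u - Ψ uh) + inner ℝ (e - Pe) (v - Ψ uh) := hsplit
      _ ≤ C * ‖Pe‖ * ‖e‖ + ‖e‖ * dist (Ψ uh) v := add_le_add hb1 hb2
  by_cases hze : ‖e‖ = 0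
  · rw [hze, mul_zero]
    have hC : (0:ℝ) ≤ C := hc.le.trans hcC
    have h1 : (0:ℝ) ≤ C / Real.sqrt c * ‖Pe‖ := by positivity
    have h2 : (0:ℝ) ≤ 1 / Real.sqrt c * Metric.infDist (Ψ uh) (V : Set H) :=
      mul_nonneg (by positivity) hD0
    linarith
  have hepos : 0 < ‖e‖ := lt_of_le_of_ne (norm_nonneg _) (Ne.symm hze)
  -- divide by ‖e‖
  have key2 : ∀ v ∈ V, c * ‖e‖ ≤ C * ‖Pe‖ + dist (Ψ uh) v := by
    intro v hv
    have := key v hv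
    nlinarith [this, hepos]
  have hinf : c * ‖e‖ - C * ‖Pe‖ ≤ Metric.infDist (Ψ uh) (V : Set H) := by
    by_contra hlt
    push_neg at hlt
    obtain ⟨y, hy, hylt⟩ := (Metric.infDist_lt_iff ⟨0, V.zero_mem⟩).1 hlt
    have := key2 y hy
    linarith
  -- conclude
  rw [div_mul_eq_mul_div, one_div, inv_mul_eq_div, ← add_div, le_div_iff₀ hs]
  nlinarith [hinf, hs, norm_nonneg Pe]
end
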